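/- Let N be a normal subgroup of a finite group G such that G/N is abelian, and let π be an irreducible finite-dimensional complex representation of N. If π₁ and π₂ are irreducible finite-dimensional complex representations of G that both contain π upon restriction to N (i.e., Hom_N(π, Res_N π₁) ≠ 0 and Hom_N(π, Res_N π₂) ≠ 0), then there exists a group homomorphism χ : G → ℂˣ that is trivial on N such that π₂ ≅ π₁ ⊗ χ. -/

import Mathlib

noncomputable section

namespace RestrictionMult

variable {G : Type*} [Group G]

/-- The submodule of equivariant linear maps between two representations. -/
def equivariantHoms {V W : Type*} [AddCommGroup V] [Module ℂ V]
    [AddCommGroup W] [Module ℂ W]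
    (π : Representation ℂ G V) (σ : Representation ℂ G W) :
    Submodule ℂ (V →ₗ[ℂ] W) where
  carrier := {f | ∀ g v, f (π g v) = σ g (f v)}
  add_mem' := by intro f₁ f₂ h₁ h₂ g v; simp [h₁ g v, h₂ g v]
  zero_mem' := by intro g v; simp
  smul_mem' := by intro c f hf g v; simp [hf g v]

/-- Two representations are equivalent (isomorphic). -/
def IsRepEquiv {V W : Type*} [AddCommGroup V] [Module ℂ V]
    [AddCommGroup W] [Module ℂ W]
    (π : Representation ℂ G V) (σ : Representation ℂ G W) : Prop :=
  ∃ e : V ≃ₗ[ℂ] W, ∀ g v, e (π g v) = σ g (e v)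

/-- A representation is irreducible if the space is nonzero and the only invariant
submodules are `⊥` and `⊤`. -/
def IsIrreducibleRep {V : Type*} [AddCommGroup V] [Module ℂ V]
    (π : Representation ℂ G V) : Prop :=
  (∃ v : V, v ≠ 0) ∧
    ∀ U : Submodule ℂ V, (∀ g, ∀ v ∈ U, π g v ∈ U) → U = ⊥ ∨ U = ⊤

/-- The twist of a representation by a character `χ : G →* ℂˣ`. -/
def twist {V : Type*} [AddCommGroup V] [Module ℂ V]
    (π : Representation ℂ G V) (χ : G →* ℂˣ) : Representation ℂ G V where
  toFun g := (χ g : ℂ) • π g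
  map_one' := by simp
  map_mul' g h := by
    ext v
    simp only [Module.End.mul_apply, LinearMap.smul_apply, map_smul, map_mul, Units.val_mul,
      mul_smul]
    rw [smul_comm]

/-- The direct sum of two representations. -/
def dsum {V W : Type*} [AddCommGroup V] [Module ℂ V]
    [AddCommGroup W] [Module ℂ W]
    (π : Representation ℂ G V) (σ : Representation ℂ G W) :
    Representation ℂ G (V × W) where
  toFun g := (π g).prodMap (σ g)
  map_one' := by ext v <;> simp
  map_mul' g h := by ext v <;> simp [Module.End.mul_apply]

/-- The subrepresentation on an invariant submodule. -/
def resSub {V : Type*} [AddCommGroup V] [Module ℂ V]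
    (π : Representation ℂ G V) (U : Submodule ℂ V)
    (hU : ∀ g, ∀ v ∈ U, π g v ∈ U) : Representation ℂ G U where
  toFun g := (π g).restrict (fun v hv => hU g v hv)
  map_one' := by ext v; simp [LinearMap.restrict_apply]
  map_mul' g h := by ext v; simp [LinearMap.restrict_apply, Module.End.mul_apply]

/-- The conjugate `π^g` of a representation of a normal subgroup `N`,
given by `x ↦ π (g⁻¹ x g)`. -/
def conjRep {N : Subgroup G} [N.Normal] {V : Type*} [AddCommGroup V] [Module ℂ V]
    (π : Representation ℂ N V) (g : G) : Representation ℂ N V :=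
  π.comp (MulAut.conjNormal g⁻¹ : N ≃* N).toMonoidHom

/-- The space of the representation of `G` induced from a representation of a
subgroup `N`: functions `f : G → V` with `f (n * x) = π n (f x)`. -/
def indSubmodule (N : Subgroup G) {V : Type*} [AddCommGroup V] [Module ℂ V]
    (π : Representation ℂ N V) : Submodule ℂ (G → V) where
  carrier := {f | ∀ (n : N) (x : G), f (n * x) = π n (f x)}
  add_mem' := by intro f₁ f₂ h₁ h₂ n x; simp [h₁ n x, h₂ n x]
  zero_mem' := by intro n x; simp
  smul_mem' := by intro c f hf n x; simp [hf n x]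

/-- The representation of `G` induced from a representation `π` of a subgroup `N`,
acting by right translation on `indSubmodule N π`. -/
def ind (N : Subgroup G) {V : Type*} [AddCommGroup V] [Module ℂ V]
    (π : Representation ℂ N V) : Representation ℂ G (indSubmodule N π) where
  toFun g :=
    { toFun := fun f => ⟨fun x => (f : G → V) (x * g),
        fun n x => by simpa [mul_assoc] using f.2 n (x * g)⟩
      map_add' := fun f₁ f₂ => by ext x; rfl
      map_smul' := fun c f => by ext x; rfl }
  map_one' := by ext f x; simp
  map_mul' g h := by ext f x; simp [Module.End.mul_apply, mul_assoc]


/-- simultaneous eigenvector for a commuting representation -/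
lemma exists_common_eigenvector {W : Type*} [AddCommGroup W]
    [Module ℂ W] [FiniteDimensional ℂ W] [Nontrivial W] (ρ : Representation ℂ G W)
    (hcomm : ∀ g h : G, ∀ v : W, ρ g (ρ h v) = ρ h (ρ g v)) :
    ∃ f : W, f ≠ 0 ∧ ∃ χ : G →* ℂˣ, ∀ g, ρ g f = (χ g : ℂ) • f := by
  classical
  set S : Set (Submodule ℂ W) := {U | U ≠ ⊥ ∧ ∀ g, ∀ v ∈ U, ρ g v ∈ U} with hS
  have hTop : ⊤ ∈ S := ⟨by simp, fun g v _ => trivial⟩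
  have hne : ((fun U : Submodule ℂ W => Module.finrank ℂ U) '' S).Nonempty :=
    ⟨_, ⊤, hTop, rfl⟩
  obtain ⟨U, hU, hrank⟩ : ∃ U ∈ S, Module.finrank ℂ U =
      sInf ((fun U : Submodule ℂ W => Module.finrank ℂ U) '' S) := by
    obtain ⟨U, hU, hr⟩ := Nat.sInf_mem hne
    exact ⟨U, hU, hr⟩
  haveI : Nontrivial U := Submodule.nontrivial_iff_ne_bot.mpr hU.1
  have key : ∀ g : G, ∃ c : ℂ, ∀ v ∈ U, ρ g v = c • v := by
    intro g
    obtain ⟨c, hc⟩ := Module.End.exists_eigenvalue ((ρ g).restrict (fun v hv => hU.2 g v hv))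
    obtain ⟨u, hu⟩ := hc.exists_hasEigenvector
    refine ⟨c, ?_⟩
    set E : Submodule ℂ W :=
      { carrier := {v | v ∈ U ∧ ρ g v = c • v}
        add_mem' := by
          rintro a b ⟨ha, ha'⟩ ⟨hb, hb'⟩
          exact ⟨U.add_mem ha hb, by rw [map_add, ha', hb', smul_add]⟩
        zero_mem' := ⟨U.zero_mem, by simp⟩
        smul_mem' := by
          rintro t a ⟨ha, ha'⟩
          exact ⟨U.smul_mem t ha, by rw [map_smul, ha', smul_comm]⟩ } with hE
    have hu' : ρ g (u : W) = c • (u : W) := by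
      have h0 := hu.apply_eq_smul
      have h1 := congrArg (fun x : U => (x : W)) h0
      simpa only [LinearMap.restrict_coe_apply, SetLike.val_smul] using h1
    have hES : E ∈ S := by
      constructor
      · refine (Submodule.ne_bot_iff _).mpr ⟨(u : W), ⟨u.2, hu'⟩, ?_⟩
        simpa using hu.2
      · rintro h v ⟨hvU, hv⟩
        refine ⟨hU.2 h v hvU, ?_⟩
        rw [hcomm g h, hv, map_smul]
    have hEle : E ≤ U := fun v hv => hv.1
    have hEq : E = U := by
      refine Submodule.eq_of_le_of_finrank_le hEle ?_
      rw [hrank]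
      exact Nat.sInf_le ⟨E, hES, rfl⟩
    intro v hv
    exact ((hEq ▸ hv : v ∈ E)).2
  obtain ⟨f, hfU, hf0⟩ := Submodule.exists_mem_ne_zero_of_ne_bot hU.1
  choose c hc using key
  have uniq : ∀ a b : ℂ, a • f = b • f → a = b := by
    intro a b h
    have : (a - b) • f = 0 := by rw [sub_smul, h, sub_self]
    rcases smul_eq_zero.mp this with h' | h'
    · exact sub_eq_zero.mp h'
    · exact absurd h' hf0
  have hmul : ∀ g h : G, c (g * h) = c g * c h := by
    intro g h
    refine uniq _ _ ?_
    rw [← hc (g * h) f hfU]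
    have h1 : ρ (g * h) f = ρ g (ρ h f) := by rw [map_mul]; rfl
    rw [h1, hc h f hfU, map_smul, hc g f hfU, smul_smul, mul_comm (c h)]
  have hone : c 1 = 1 := by
    refine uniq _ _ ?_
    rw [← hc 1 f hfU]; simp
  have hinv : ∀ g : G, c g * c g⁻¹ = 1 := by
    intro g
    rw [← hmul, mul_inv_cancel, hone]
  refine ⟨f, hf0, ⟨{ toFun := fun g => ⟨c g, c g⁻¹, hinv g, by rw [mul_comm]; exact hinv g⟩
                     map_one' := Units.ext (by simpa using hone)
                     map_mul' := fun g h => Units.ext (by simpa using hmul g h) },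
          fun g => hc g f hfU⟩⟩



lemma mem_equivariantHoms {V W : Type*} [AddCommGroup V] [Module ℂ V]
    [AddCommGroup W] [Module ℂ W]
    {π : Representation ℂ G V} {σ : Representation ℂ G W} {f : V →ₗ[ℂ] W} :
    f ∈ equivariantHoms π σ ↔ ∀ g v, f (π g v) = σ g (f v) := Iff.rfl

lemma rep_mul_apply {V : Type*} [AddCommGroup V] [Module ℂ V]
    (π : Representation ℂ G V) (a b : G) (v : V) :
    π a (π b v) = π (a * b) v := by rw [map_mul]; rfl

lemma conj_mem_equivariantHoms (N : Subgroup G) [N.Normal]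
    {V₁ V₂ : Type*} [AddCommGroup V₁] [Module ℂ V₁] [AddCommGroup V₂] [Module ℂ V₂]
    (π₁ : Representation ℂ G V₁) (π₂ : Representation ℂ G V₂) (g : G)
    {L : V₁ →ₗ[ℂ] V₂} (hL : L ∈ equivariantHoms (π₁.comp N.subtype) (π₂.comp N.subtype)) :
    π₂ g ∘ₗ L ∘ₗ π₁ g⁻¹ ∈ equivariantHoms (π₁.comp N.subtype) (π₂.comp N.subtype) := by
  intro n v
  have hmem : g⁻¹ * (n : G) * g ∈ N := by
    simpa using (‹N.Normal›.conj_mem (n : G) n.2 g⁻¹)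
  show π₂ g (L (π₁ g⁻¹ (π₁ (n : G) v))) = π₂ (n : G) (π₂ g (L (π₁ g⁻¹ v)))
  have h1 : π₁ g⁻¹ (π₁ (n : G) v) = π₁ (g⁻¹ * (n : G) * g) (π₁ g⁻¹ v) := by
    rw [rep_mul_apply, rep_mul_apply]
    congr 1
    group
  rw [h1]
  have h2 := hL ⟨g⁻¹ * (n : G) * g, hmem⟩ (π₁ g⁻¹ v)
  simp only [MonoidHom.comp_apply, Subgroup.coe_subtype] at h2
  rw [h2, rep_mul_apply, rep_mul_apply]
  congr 1
  group

/-- conjugation action of `G` on `N`-equivariant homs -/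
def conjAction (N : Subgroup G) [N.Normal]
    {V₁ V₂ : Type*} [AddCommGroup V₁] [Module ℂ V₁] [AddCommGroup V₂] [Module ℂ V₂]
    (π₁ : Representation ℂ G V₁) (π₂ : Representation ℂ G V₂) :
    Representation ℂ G (equivariantHoms (π₁.comp N.subtype) (π₂.comp N.subtype)) where
  toFun g :=
    { toFun := fun L => ⟨π₂ g ∘ₗ (L : V₁ →ₗ[ℂ] V₂) ∘ₗ π₁ g⁻¹,
        conj_mem_equivariantHoms N π₁ π₂ g L.2⟩
      map_add' := fun L M => by
        apply Subtype.ext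
        ext v
        simp
      map_smul' := fun t L => by
        apply Subtype.ext
        ext v
        simp }
  map_one' := by
    refine LinearMap.ext fun L => Subtype.ext (LinearMap.ext fun v => ?_)
    simp
  map_mul' g h := by
    refine LinearMap.ext fun L => Subtype.ext (LinearMap.ext fun v => ?_)
    simp only [LinearMap.coe_mk, AddHom.coe_mk, LinearMap.coe_comp, Function.comp_apply,
      Module.End.mul_apply, mul_inv_rev]
    rw [rep_mul_apply π₁, ← rep_mul_apply π₂]

lemma conjAction_apply (N : Subgroup G) [N.Normal]
    {V₁ V₂ : Type*} [AddCommGroup V₁] [Module ℂ V₁] [AddCommGroup V₂] [Module ℂ V₂]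
    (π₁ : Representation ℂ G V₁) (π₂ : Representation ℂ G V₂) (g : G)
    (L : equivariantHoms (π₁.comp N.subtype) (π₂.comp N.subtype)) (v : V₁) :
    ((conjAction N π₁ π₂ g L : V₁ →ₗ[ℂ] V₂)) v = π₂ g ((L : V₁ →ₗ[ℂ] V₂) (π₁ g⁻¹ v)) := rfl

lemma conjAction_trivial (N : Subgroup G) [N.Normal]
    {V₁ V₂ : Type*} [AddCommGroup V₁] [Module ℂ V₁] [AddCommGroup V₂] [Module ℂ V₂]
    (π₁ : Representation ℂ G V₁) (π₂ : Representation ℂ G V₂) {n : G} (hn : n ∈ N)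
    (L : equivariantHoms (π₁.comp N.subtype) (π₂.comp N.subtype)) :
    conjAction N π₁ π₂ n L = L := by
  apply Subtype.ext
  ext v
  have h2 := L.2 (⟨n, hn⟩ : N)⁻¹ v
  simp only [MonoidHom.comp_apply, Subgroup.coe_subtype, InvMemClass.coe_inv] at h2
  rw [conjAction_apply, h2, rep_mul_apply, mul_inv_cancel, map_one]
  rfl


/-- If `N` is a normal subgroup of a finite group `G` with abelian
quotient, `π` is an irreducible complex representation of `N`, and `π₁`, `π₂` are
irreducible complex representations of `G` both containing `π` on restriction to `N`,
then `π₂ ≅ π₁ ⊗ χ` for some character `χ : G → ℂˣ` trivial on `N`. -/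
theorem twist_of_common_constituent
    {G : Type*} [Group G] [Finite G] (N : Subgroup G) [N.Normal]
    (hab : ∀ a b : G ⧸ N, a * b = b * a)
    {V V₁ V₂ : Type*}
    [AddCommGroup V] [Module ℂ V] [FiniteDimensional ℂ V]
    [AddCommGroup V₁] [Module ℂ V₁] [FiniteDimensional ℂ V₁]
    [AddCommGroup V₂] [Module ℂ V₂] [FiniteDimensional ℂ V₂]
    (π : Representation ℂ N V) (hπ : IsIrreducibleRep π)
    (π₁ : Representation ℂ G V₁) (hπ₁ : IsIrreducibleRep π₁)
    (π₂ : Representation ℂ G V₂) (hπ₂ : IsIrreducibleRep π₂)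
    (h₁ : equivariantHoms π (π₁.comp N.subtype) ≠ ⊥)
    (h₂ : equivariantHoms π (π₂.comp N.subtype) ≠ ⊥) :
    ∃ χ : G →* ℂˣ, (∀ n ∈ N, χ n = 1) ∧ IsRepEquiv π₂ (twist π₁ χ) := by
  classical
  haveI : Fintype N := Fintype.ofFinite N
  obtain ⟨f₁, hf₁mem', hf₁ne⟩ := Submodule.exists_mem_ne_zero_of_ne_bot h₁
  obtain ⟨f₂, hf₂mem', hf₂ne⟩ := Submodule.exists_mem_ne_zero_of_ne_bot h₂
  rw [mem_equivariantHoms] at hf₁mem' hf₂mem'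
  have hf₁mem : ∀ (n : N) (v : V), f₁ (π n v) = π₁ (n : G) (f₁ v) := by
    intro n v
    simpa only [MonoidHom.comp_apply, Subgroup.coe_subtype] using hf₁mem' n v
  have hf₂mem : ∀ (n : N) (v : V), f₂ (π n v) = π₂ (n : G) (f₂ v) := by
    intro n v
    simpa only [MonoidHom.comp_apply, Subgroup.coe_subtype] using hf₂mem' n v
  -- f₁ is injective
  have hkinv : ∀ (n : N), ∀ v ∈ LinearMap.ker f₁, π n v ∈ LinearMap.ker f₁ := by
    intro n v hv
    simp only [LinearMap.mem_ker] at hv ⊢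
    rw [hf₁mem n v, hv, map_zero]
  have hker : LinearMap.ker f₁ = ⊥ := by
    rcases hπ.2 _ hkinv with h | h
    · exact h
    · exact absurd (LinearMap.ker_eq_top.mp h) hf₁ne
  obtain ⟨g₁, hg₁⟩ := f₁.exists_leftInverse_of_injective hker
  have hg₁' : ∀ x, g₁ (f₁ x) = x := fun x => by
    simpa using LinearMap.ext_iff.mp hg₁ x
  have hc0 : (Fintype.card N : ℂ) ≠ 0 := Nat.cast_ne_zero.mpr Fintype.card_ne_zero
  set T : N → (V₁ →ₗ[ℂ] V₂) :=
    fun n => π₂ (n : G) ∘ₗ (f₂ ∘ₗ g₁) ∘ₗ π₁ ((n⁻¹ : N) : G) with hT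
  set A : V₁ →ₗ[ℂ] V₂ := (Fintype.card N : ℂ)⁻¹ • ∑ n : N, T n with hA
  have hTswap : ∀ (m k : N) (v : V₁), π₂ (m : G) (T k v) = T (m * k) (π₁ (m : G) v) := by
    intro m k v
    simp only [hT, LinearMap.coe_comp, Function.comp_apply]
    rw [rep_mul_apply π₁, rep_mul_apply π₂]
    have e1 : ((m * k : N) : G) = (m : G) * (k : G) := rfl
    have e2 : ((((m * k)⁻¹ : N)) : G) * (m : G) = (((k⁻¹ : N)) : G) := by push_cast; group
    rw [e1, e2]
  have hAmem : A ∈ equivariantHoms (π₁.comp N.subtype) (π₂.comp N.subtype) := by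
    rw [mem_equivariantHoms]
    intro m v
    simp only [MonoidHom.comp_apply, Subgroup.coe_subtype]
    show A (π₁ (m : G) v) = π₂ (m : G) (A v)
    rw [hA]
    simp only [LinearMap.smul_apply, LinearMap.sum_apply]
    rw [map_smul, map_sum]
    congr 1
    exact (Fintype.sum_equiv (Equiv.mulLeft m) _ _ (fun k => hTswap m k v)).symm
  have hAf₁ : ∀ v, A (f₁ v) = f₂ v := by
    intro v
    have hterm : ∀ n : N, T n (f₁ v) = f₂ v := by
      intro n
      simp only [hT, LinearMap.coe_comp, Function.comp_apply]
      rw [← hf₁mem n⁻¹ v, hg₁', hf₂mem n⁻¹ v, rep_mul_apply π₂]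
      have : (n : G) * ((n⁻¹ : N) : G) = 1 := by push_cast; group
      rw [this, map_one, Module.End.one_apply]
    rw [hA]
    simp only [LinearMap.smul_apply, LinearMap.sum_apply]
    rw [Finset.sum_congr rfl (fun n _ => hterm n), Finset.sum_const, Finset.card_univ,
      ← Nat.cast_smul_eq_nsmul ℂ, smul_smul, inv_mul_cancel₀ hc0, one_smul]
  obtain ⟨v₂, hv₂⟩ : ∃ v, f₂ v ≠ 0 := by
    by_contra h
    push_neg at h
    exact hf₂ne (LinearMap.ext fun v => by simpa using h v)
  have hAne : A ≠ 0 := by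
    intro h
    apply hv₂
    rw [← hAf₁ v₂, h, LinearMap.zero_apply]
  haveI : Nontrivial (equivariantHoms (π₁.comp N.subtype) (π₂.comp N.subtype)) := by
    refine Submodule.nontrivial_iff_ne_bot.mpr fun hbot => hAne ?_
    simpa [hbot, Submodule.mem_bot] using hAmem
  -- the conjugation action commutes
  have hcomm : ∀ g h : G, ∀ L, conjAction N π₁ π₂ g (conjAction N π₁ π₂ h L) =
      conjAction N π₁ π₂ h (conjAction N π₁ π₂ g L) := by
    intro g h L
    rw [rep_mul_apply (conjAction N π₁ π₂) g h, rep_mul_apply (conjAction N π₁ π₂) h g]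
    have hq : ((h * g : G) : G ⧸ N) = ((g * h : G) : G ⧸ N) := by
      rw [QuotientGroup.mk_mul, QuotientGroup.mk_mul]
      exact hab _ _
    have hmem : (h * g)⁻¹ * (g * h) ∈ N := QuotientGroup.eq.mp hq
    have hdec : g * h = (h * g) * ((h * g)⁻¹ * (g * h)) := by group
    rw [hdec, map_mul, Module.End.mul_apply, conjAction_trivial N π₁ π₂ hmem L]
  obtain ⟨F, hF0, χ, hχ⟩ := exists_common_eigenvector (conjAction N π₁ π₂) hcomm
  have uniqW : ∀ a b : ℂ,
      a • F = b • F → a = b := by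
    intro a b h
    have h0 : (a - b) • F = a • F - b • F := sub_smul a b F
    rw [h, sub_self] at h0
    rcases smul_eq_zero.mp h0 with h' | h'
    · exact sub_eq_zero.mp h'
    · exact absurd h' hF0
  have hχN : ∀ n ∈ N, χ n = 1 := by
    intro n hn
    have h1 := hχ n
    rw [conjAction_trivial N π₁ π₂ hn F] at h1
    refine Units.ext ?_
    have : (χ n : ℂ) • F = (1 : ℂ) • F := by rw [← h1, one_smul]
    simpa using uniqW _ _ this
  set L : V₁ →ₗ[ℂ] V₂ := (F : V₁ →ₗ[ℂ] V₂) with hLdef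
  have hLne : L ≠ 0 := fun h => hF0 (Subtype.ext h)
  have hrel : ∀ g v, π₂ g (L v) = (χ g : ℂ) • L (π₁ g v) := by
    intro g v
    have h2 := congrArg
      (fun x : ↥(equivariantHoms (π₁.comp N.subtype) (π₂.comp N.subtype)) =>
        (x : V₁ →ₗ[ℂ] V₂) (π₁ g v)) (hχ g)
    simp only [conjAction_apply, SetLike.val_smul, LinearMap.smul_apply] at h2
    rw [rep_mul_apply π₁ g⁻¹ g, inv_mul_cancel, map_one, Module.End.one_apply] at h2
    exact h2
  have hLtwist : ∀ g v, L (twist π₁ χ g v) = π₂ g (L v) := by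
    intro g v
    have ht : twist π₁ χ g v = (χ g : ℂ) • π₁ g v := rfl
    rw [ht, map_smul, ← hrel]
  have hkinv₁ : ∀ g, ∀ v ∈ LinearMap.ker L, π₁ g v ∈ LinearMap.ker L := by
    intro g v hv
    simp only [LinearMap.mem_ker] at hv ⊢
    have h3 := hrel g v
    rw [hv, map_zero] at h3
    rcases smul_eq_zero.mp h3.symm with h' | h'
    · exact absurd h' (Units.ne_zero _)
    · exact h'
  have hkerL : LinearMap.ker L = ⊥ := by
    rcases hπ₁.2 _ hkinv₁ with h | h
    · exact h
    · exact absurd (LinearMap.ker_eq_top.mp h) hLne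
  have hrinv : ∀ g, ∀ w ∈ LinearMap.range L, π₂ g w ∈ LinearMap.range L := by
    rintro g w ⟨v, rfl⟩
    exact ⟨twist π₁ χ g v, hLtwist g v⟩
  have hrangeL : LinearMap.range L = ⊤ := by
    rcases hπ₂.2 _ hrinv with h | h
    · exact absurd (LinearMap.range_eq_bot.mp h) hLne
    · exact h
  have hbij : Function.Bijective L :=
    ⟨LinearMap.ker_eq_bot.mp hkerL, LinearMap.range_eq_top.mp hrangeL⟩
  refine ⟨χ, hχN, (LinearEquiv.ofBijective L hbij).symm, fun g w => ?_⟩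
  apply hbij.1
  have happ : ∀ w, L ((LinearEquiv.ofBijective L hbij).symm w) = w := fun w => by
    set_option linter.unnecessarySimpa false in
    simpa using (LinearEquiv.ofBijective L hbij).apply_symm_apply w
  rw [happ, hLtwist, happ]

end RestrictionMult
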